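/- Let e ≥ 2 be an integer and write e = 2^b · m with m odd. Let K be an algebraic closure of F_2, and suppose that the polynomial (X^e + Y^e)/(X + Y) ∈ K[X,Y] is an s-th power in K[X,Y] for some integer s ≥ 2. Then m = 1, i.e., e is a power of 2. -/
import Mathlib

open MvPolynomial

lemma aux_rootMult_pow {K : Type*} [CommRing K] [IsDomain K] {p : Polynomial K}
    (hp : p ≠ 0) (a : K) (n : ℕ) :
    (p ^ n).rootMultiplicity a = n * p.rootMultiplicity a := by
  induction n with
  | zero => simp
  | succ n ih =>
    rw [pow_succ, Polynomial.rootMultiplicity_mul (mul_ne_zero (pow_ne_zero _ hp) hp), ih]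
    ring

theorem stmt_13 (e : ℕ) (he : 2 ≤ e) (b m : ℕ) (hm : Odd m) (hem : e = 2 ^ b * m)
    (P : MvPolynomial (Fin 2) (AlgebraicClosure (ZMod 2)))
    (hP : (MvPolynomial.X 0 + MvPolynomial.X 1) * P =
        (MvPolynomial.X 0) ^ e + (MvPolynomial.X 1) ^ e)
    (s : ℕ) (hs : 2 ≤ s)
    (R : MvPolynomial (Fin 2) (AlgebraicClosure (ZMod 2))) (hR : P = R ^ s) :
    m = 1 := by
  by_contra hm1
  set K := AlgebraicClosure (ZMod 2) with hK
  have hchar : CharP K 2 := inferInstance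
  have hm0 : m ≠ 0 := by rintro rfl; exact (Nat.not_odd_iff_even.mpr Even.zero) hm
  have hm2 : 2 ≤ m := by omega
  -- cast of m is nonzero
  have hmK : (m : K) ≠ 0 := by
    intro h
    exact (Nat.not_even_iff_odd.mpr hm)
      (even_iff_two_dvd.mpr ((CharP.cast_eq_zero_iff K 2 m).mp h))
  -- specialize to one variable
  set f : Fin 2 → Polynomial K := ![Polynomial.X, 1] with hf
  set φ := MvPolynomial.aeval (R := K) f with hφ
  have h1 : (Polynomial.X + 1) * φ P = Polynomial.X ^ e + 1 := by
    have := congrArg φ hP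
    simpa [hφ, hf] using this
  have hpr : φ P = (φ R) ^ s := by rw [hR]; exact map_pow φ R s
  -- char two rewriting
  haveI : CharP (Polynomial K) 2 := inferInstance
  have hsub : (Polynomial.X + 1 : Polynomial K) = Polynomial.X - Polynomial.C 1 := by
    rw [Polynomial.C_1, CharTwo.sub_eq_add]
  have hXe : (Polynomial.X ^ e + 1 : Polynomial K) = (Polynomial.X ^ m - 1) ^ 2 ^ b := by
    rw [sub_pow_char_pow, ← pow_mul, one_pow, CharTwo.sub_eq_add, mul_comm m, ← hem]
  set q : Polynomial K := Polynomial.X ^ m - 1 with hq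
  -- q is separable
  have hqsep : q.Separable := by
    have := Polynomial.separable_X_pow_sub_C (F := K) (1 : K) hmK one_ne_zero
    simpa [hq] using this
  have hqne : q ≠ 0 := hqsep.ne_zero
  -- nonzero facts
  have hXene : (Polynomial.X ^ e + 1 : Polynomial K) ≠ 0 := by
    rw [hXe]; exact pow_ne_zero _ hqne
  have hPne : φ P ≠ 0 := by
    intro h; rw [h, mul_zero] at h1; exact hXene h1.symm
  have hRne : φ R ≠ 0 := by
    intro h; rw [h, zero_pow (by omega : s ≠ 0)] at hpr; exact hPne hpr
  -- multiplicities of roots of q are exactly 1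
  have hmult : ∀ a : K, q.IsRoot a → q.rootMultiplicity a = 1 := by
    intro a ha
    refine le_antisymm (Polynomial.rootMultiplicity_le_one_of_separable hqsep a) ?_
    exact (Polynomial.rootMultiplicity_pos hqne).mpr ha
  -- primitive root ζ
  haveI : NeZero ((m : K)) := ⟨hmK⟩
  obtain ⟨ζ, hζ⟩ := HasEnoughRootsOfUnity.exists_primitiveRoot K m
  have hζ1 : ζ ≠ 1 := by
    rintro rfl
    exact hm1 (Nat.dvd_one.mp (hζ.dvd_of_pow_eq_one 1 (one_pow 1)))
  have hroot1 : q.IsRoot 1 := by simp [hq, Polynomial.IsRoot]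
  have hrootζ : q.IsRoot ζ := by
    simp [hq, Polynomial.IsRoot, hζ.pow_eq_one]
  -- rootMultiplicity computations
  have hmulne : (Polynomial.X - Polynomial.C 1) * φ P ≠ 0 := by
    rw [← hsub, h1]; exact hXene
  have hmul1 : 1 + (φ P).rootMultiplicity 1 = 2 ^ b := by
    have h2 : Polynomial.rootMultiplicity 1 ((Polynomial.X - Polynomial.C 1) * φ P) = 2 ^ b := by
      rw [← hsub, h1, hXe, aux_rootMult_pow hqne, hmult 1 hroot1, mul_one]
    rw [Polynomial.rootMultiplicity_mul hmulne, Polynomial.rootMultiplicity_X_sub_C_self] at h2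
    exact h2
  have hmulζ : (φ P).rootMultiplicity ζ = 2 ^ b := by
    have h2 : Polynomial.rootMultiplicity ζ ((Polynomial.X - Polynomial.C 1) * φ P) = 2 ^ b := by
      rw [← hsub, h1, hXe, aux_rootMult_pow hqne, hmult ζ hrootζ, mul_one]
    have hnr : ¬ Polynomial.IsRoot (Polynomial.X - Polynomial.C (1 : K)) ζ := by
      simp [Polynomial.IsRoot, sub_eq_zero, hζ1]
    rw [Polynomial.rootMultiplicity_mul hmulne, Polynomial.rootMultiplicity_eq_zero hnr,
      zero_add] at h2
    exact h2
  -- P = R^s gives divisibility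
  have hd1 : (φ P).rootMultiplicity 1 = s * (φ R).rootMultiplicity 1 := by
    rw [hpr, aux_rootMult_pow hRne]
  have hdζ : (φ P).rootMultiplicity ζ = s * (φ R).rootMultiplicity ζ := by
    rw [hpr, aux_rootMult_pow hRne]
  set u := (φ R).rootMultiplicity 1
  set v := (φ R).rootMultiplicity ζ
  have h2 : 1 + s * u = s * v := by rw [← hd1, ← hdζ, hmul1, hmulζ]
  have : s ∣ 1 := by
    have : s * v - s * u = 1 := by omega
    calc s ∣ s * v - s * u := Nat.dvd_sub (dvd_mul_right s v) (dvd_mul_right s u)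
    _ = 1 := this
  have := Nat.le_of_dvd one_pos this
  omega
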